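/- Let q be a prime power, m, d positive integers, A an abelian group whose exponent divides q − 1, and ι : GL_m(𝔽_{q^d}) → A a group homomorphism. Then ι ∘ F = ι, where F is the entrywise q-power Frobenius automorphism of GL_m(𝔽_{q^d}); equivalently, F acts trivially on the quotient GL_m(𝔽_{q^d})/ker ι. -/
import Mathlib


/-!
Any homomorphism from `GL_m(𝔽_{q^d})` to an abelian group of exponent dividing `q − 1`
is invariant under the entrywise `q`-power Frobenius.
-/

theorem hom_to_exponent_sub_one_frobenius_invariant
    (q : ℕ) (hq : IsPrimePow q) (m d : ℕ) (hm : 0 < m) (hd : 0 < d)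
    (F : Type) [Field F] [Fintype F] [DecidableEq F] (hF : Fintype.card F = q ^ d)
    (A : Type) [CommGroup A] (hA : ∀ a : A, a ^ (q - 1) = 1)
    (φ : F →+* F) (hφ : ∀ x : F, φ x = x ^ q)
    (ι : Matrix.GeneralLinearGroup (Fin m) F →* A) :
    ∀ g : Matrix.GeneralLinearGroup (Fin m) F,
      ι (Units.map (RingHom.mapMatrix φ).toMonoidHom g) = ι g := by
  intro g
  have hq2 : 2 ≤ q := hq.two_le
  -- `(q : F) = 0` since the characteristic of `F` is the prime underlying `q`
  have hqF : (q : F) = 0 := by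
    obtain ⟨p, n, hp, hn, rfl⟩ := hq
    have hp' : Nat.Prime p := hp.nat_prime
    haveI : CharP F (ringChar F) := ringChar.charP F
    have hrprime : (ringChar F).Prime := CharP.char_is_prime F _
    obtain ⟨k, hkp, hcard⟩ := FiniteField.card F (ringChar F)
    have hdvd : ringChar F ∣ p := by
      have h1 : ringChar F ∣ (p ^ n) ^ d := by
        rw [← hF, hcard]
        exact dvd_pow_self _ (by positivity)
      exact hrprime.dvd_of_dvd_pow (by rwa [← pow_mul] at h1)
    have hrp : ringChar F = p := (Nat.prime_dvd_prime_iff_eq hrprime hp').mp hdvd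
    push_cast
    rw [show ((p : F)) = 0 from by rw [← hrp]; exact CharP.cast_eq_zero F _]
    exact zero_pow hn.ne'
  -- `ι` collapses `q`-th powers
  have hpowq : ∀ u : (Matrix (Fin m) (Fin m) F)ˣ, ι (u ^ q) = ι u := by
    intro u
    rw [map_pow]
    conv_lhs => rw [show q = (q - 1) + 1 by omega]
    rw [pow_succ, hA, one_mul]
  -- `ι` kills any unit whose matrix is a transvection
  have htrans : ∀ (i j : Fin m) (_ : i ≠ j) (c : F)
      (u : (Matrix (Fin m) (Fin m) F)ˣ), (u : Matrix (Fin m) (Fin m) F)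
        = Matrix.transvection i j c → ι u = 1 := by
    intro i j hij c u hu
    have hpow : ∀ k : ℕ, (u : Matrix (Fin m) (Fin m) F) ^ k
        = Matrix.transvection i j ((k : F) * c) := by
      intro k
      induction k with
      | zero => simp
      | succ k ih =>
        rw [pow_succ, ih, hu, Matrix.transvection_mul_transvection_same i j hij]
        congr 1
        push_cast; ring
    have huq : u ^ q = 1 := by
      ext
      rw [Units.val_pow_eq_pow_val, hpow q, hqF, zero_mul, Units.val_one,
        Matrix.transvection_zero]
    have h1 : ι u ^ q = 1 := by rw [← map_pow, huq, map_one]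
    have h2 : ι u ^ q = ι u ^ (q - 1) * ι u := by
      rw [← pow_succ]
      congr 1
      omega
    rw [hA, one_mul] at h2
    rw [← h2, h1]
  -- main induction on the matrix of `g`
  suffices H : ∀ u : (Matrix (Fin m) (Fin m) F)ˣ,
      (u : Matrix (Fin m) (Fin m) F) = (g : Matrix (Fin m) (Fin m) F) →
        ι (Units.map (RingHom.mapMatrix φ).toMonoidHom u) = ι u from H g rfl
  have hgdet : (g : Matrix (Fin m) (Fin m) F).det ≠ 0 :=
    ((Matrix.isUnit_iff_isUnit_det _).1 g.isUnit).ne_zero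
  refine Matrix.diagonal_transvection_induction_of_det_ne_zero
    (fun N => ∀ u : (Matrix (Fin m) (Fin m) F)ˣ,
      (u : Matrix (Fin m) (Fin m) F) = N →
        ι (Units.map (RingHom.mapMatrix φ).toMonoidHom u) = ι u)
    (g : Matrix (Fin m) (Fin m) F) hgdet ?_ ?_ ?_
  · -- diagonal case
    intro D hD u hu
    have hfun : (fun i => φ (D i)) = D ^ q := by
      funext i
      simp [hφ]
    have hmap : (RingHom.mapMatrix φ) (Matrix.diagonal D)
        = (Matrix.diagonal D) ^ q := by
      rw [Matrix.diagonal_pow, RingHom.mapMatrix_apply,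
        Matrix.diagonal_map (map_zero φ), hfun]
    have h2 : Units.map (RingHom.mapMatrix φ).toMonoidHom u = u ^ q := by
      ext
      simp [hu, hmap]
    rw [h2, hpowq]
  · -- transvection case
    rintro ⟨i, j, hij, c⟩ u hu
    rw [Matrix.TransvectionStruct.toMatrix_mk] at hu
    have h1 : ι u = 1 := htrans i j hij c u hu
    have h2 : ι (Units.map (RingHom.mapMatrix φ).toMonoidHom u) = 1 := by
      apply htrans i j hij (φ c)
      have hstd : (Matrix.single i j c).map φ
          = Matrix.single i j (φ c) := by
        ext a b
        by_cases h : i = a ∧ j = b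
        · obtain ⟨rfl, rfl⟩ := h; simp
        · rw [Matrix.map_apply, Matrix.single_apply_of_ne (h := h),
            Matrix.single_apply_of_ne (h := h), map_zero]
      simp only [Units.coe_map, RingHom.toMonoidHom_eq_coe, MonoidHom.coe_coe,
        RingHom.mapMatrix_apply, hu, Matrix.transvection]
      rw [Matrix.map_add _ (map_add φ), Matrix.map_one _ (map_zero φ) (map_one φ), hstd]
    rw [h1, h2]
  · -- multiplication case
    intro P Q hP hQ ihP ihQ u hu
    have hPu : IsUnit P := (Matrix.isUnit_iff_isUnit_det P).2 (Ne.isUnit hP)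
    have hQu : IsUnit Q := (Matrix.isUnit_iff_isUnit_det Q).2 (Ne.isUnit hQ)
    have huPQ : u = hPu.unit * hQu.unit := by
      ext; simp [hu]
    rw [huPQ, map_mul, map_mul,
      ihP hPu.unit hPu.unit_spec, ihQ hQu.unit hQu.unit_spec, ← map_mul]
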